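/- arXiv:2511.14822 — 3 statements merged into one kernel-verified Lean document; each statement's English description precedes it below -/
import Mathlib

section
/- (The three universal functionals agree on v-representable densities.) Let ρ ∈ V* be pure-state v-representable, i.e., there exist v ∈ V and a pure ground state Γ of ι(v)+W with ι*(Γ) = ρ. Then F_p(ρ) = Tr(Γ W) and F_e(ρ) = Tr(Γ W); in particular F_p(ρ) = F_e(ρ) and both equal the common value Tr(Γ W) for any such ground state Γ. -/
open Filter Topology

noncomputable section

variable {V H : Type*}
  [AddCommGroup V] [Module ℝ V]
  [NormedAddCommGroup H] [InnerProductSpace ℂ H]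

/-- The real expectation value `⟨ψ, T ψ⟩` of an operator `T` in the vector `ψ`. -/
def expectation (T : H →ₗ[ℂ] H) (ψ : H) : ℝ := (inner ℂ ψ (T ψ) : ℂ).re

/-- The ground state energy of the Hamiltonian `ι v + W`. -/
def energy (ι : V →ₗ[ℝ] (H →ₗ[ℂ] H)) (W : H →ₗ[ℂ] H) (v : V) : ℝ :=
  sInf {r : ℝ | ∃ ψ : H, ‖ψ‖ = 1 ∧ r = expectation (ι v + W) ψ}

/-- The density `ι*(|ψ⟩⟨ψ|)` of the pure state given by the unit vector `ψ`,
as an element of the dual space `V*`. -/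
def pureDensity (ι : V →ₗ[ℝ] (H →ₗ[ℂ] H)) (ψ : H) : Module.Dual ℝ V where
  toFun v := expectation (ι v) ψ
  map_add' v w := by simp [expectation, inner_add_right]
  map_smul' c v := by
    simp only [map_smul, LinearMap.smul_apply, expectation, RingHom.id_apply, smul_eq_mul]
    rw [← algebraMap_smul ℂ c ((ι v) ψ), Complex.coe_algebraMap, inner_smul_right]
    simp

/-- An ensemble state: a positive semidefinite operator of unit trace. -/
def IsEnsembleState (Γ : H →ₗ[ℂ] H) : Prop :=
  Γ.IsSymmetric ∧ (∀ x : H, 0 ≤ (inner ℂ x (Γ x) : ℂ).re) ∧ LinearMap.trace ℂ H Γ = 1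

/-- The density `ι*(Γ)` of a state `Γ`, `v ↦ Tr(Γ ι(v))`, as an element of `V*`. -/
def traceDensity (ι : V →ₗ[ℝ] (H →ₗ[ℂ] H)) (Γ : H →ₗ[ℂ] H) : Module.Dual ℝ V where
  toFun v := (LinearMap.trace ℂ H (ι v ∘ₗ Γ)).re
  map_add' v w := by simp [map_add, LinearMap.add_comp]
  map_smul' c v := by
    simp only [map_smul, RingHom.id_apply, smul_eq_mul]
    rw [← algebraMap_smul ℂ c (ι v), LinearMap.smul_comp, map_smul, Complex.coe_algebraMap]
    simp

/-- The pure (Levy–Lieb) universal functional `F_p`. -/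
def Fp (ι : V →ₗ[ℝ] (H →ₗ[ℂ] H)) (W : H →ₗ[ℂ] H) (ρ : Module.Dual ℝ V) : ℝ :=
  sInf {r : ℝ | ∃ ψ : H, ‖ψ‖ = 1 ∧ pureDensity ι ψ = ρ ∧ r = expectation W ψ}

/-- The ensemble (Lieb/Valone) universal functional `F_e`. -/
def Fe (ι : V →ₗ[ℝ] (H →ₗ[ℂ] H)) (W : H →ₗ[ℂ] H) (ρ : Module.Dual ℝ V) : ℝ :=
  sInf {r : ℝ | ∃ Γ : H →ₗ[ℂ] H, IsEnsembleState Γ ∧ traceDensity ι Γ = ρ ∧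
    r = (LinearMap.trace ℂ H (W ∘ₗ Γ)).re}

/-- The weight space of a functional `α ∈ V*`. -/
def weightSpace (ι : V →ₗ[ℝ] (H →ₗ[ℂ] H)) (α : Module.Dual ℝ V) : Submodule ℂ H where
  carrier := {ψ : H | ∀ v : V, ι v ψ = (α v : ℂ) • ψ}
  add_mem' := by
    intro a b ha hb v
    rw [map_add, ha v, hb v, smul_add]
  zero_mem' := by intro v; simp
  smul_mem' := by
    intro c x hx v
    rw [LinearMap.map_smul, hx v, smul_comm]

/-- The set of weights of an abelian functional theory. -/
def weights (ι : V →ₗ[ℝ] (H →ₗ[ℂ] H)) : Set (Module.Dual ℝ V) :=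
  {α : Module.Dual ℝ V | weightSpace ι α ≠ ⊥}

/-- The derivative of the density map along the set of pure states at `|Ψ⟩⟨Ψ|`,
applied to the tangent vector `φ ⊥ Ψ`: the functional `v ↦ 2 Re⟨φ, ι(v)Ψ⟩`. -/
def derivDensity (ι : V →ₗ[ℝ] (H →ₗ[ℂ] H)) (Ψ φ : H) : Module.Dual ℝ V where
  toFun v := 2 * (inner ℂ φ (ι v Ψ) : ℂ).re
  map_add' v w := by simp [inner_add_right]; ring
  map_smul' c v := by
    simp only [map_smul, LinearMap.smul_apply, RingHom.id_apply, smul_eq_mul]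
    rw [← algebraMap_smul ℂ c ((ι v) Ψ), Complex.coe_algebraMap, inner_smul_right]
    simp; ring

/-- `ρ` is a relative interior point of the convex set `C` (i.e. an interior point
of `C` within its affine span): every point of `C` lies on a segment inside `C`
having `ρ` in its (open) interior. -/
def IsRelInterior {M : Type*} [AddCommGroup M] [Module ℝ M] (C : Set M) (ρ : M) : Prop :=
  ρ ∈ C ∧ ∀ σ ∈ C, ∃ τ ∈ C, ∃ t : ℝ, 0 < t ∧ t < 1 ∧ ρ = t • σ + (1 - t) • τ

/-- Strong orthogonality: componentwise orthogonality in every weight space. -/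
def StronglyOrthogonal [FiniteDimensional ℂ H] (ι : V →ₗ[ℝ] (H →ₗ[ℂ] H)) (Φ Φ' : H) : Prop :=
  ∀ α : Module.Dual ℝ V, weightSpace ι α ≠ ⊥ →
    (inner ℂ ((weightSpace ι α).orthogonalProjectionOnto Φ)
        ((weightSpace ι α).orthogonalProjectionOnto Φ') : ℂ) = 0

/-- The `k`-convex hull of a set. -/
def convk {M : Type*} [AddCommGroup M] [Module ℝ M] (k : ℕ) (X : Set M) : Set M :=
  {ρ : M | ∃ (t : Fin k → ℝ) (x : Fin k → M),
    (∀ i, 0 ≤ t i) ∧ (∑ i, t i) = 1 ∧ (∀ i, x i ∈ X) ∧ (∑ i, t i • x i) = ρ}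

/-- The operator `A ⊗ id` on `H ⊗ ℂᵏ ≅ H ⊕ ⋯ ⊕ H` (k summands). -/
def opBar (k : ℕ) (A : H →ₗ[ℂ] H) :
    (PiLp 2 fun _ : Fin k => H) →ₗ[ℂ] (PiLp 2 fun _ : Fin k => H) where
  toFun x := WithLp.toLp 2 (fun i => A (x i))
  map_add' x y := by ext i; simp [PiLp.add_apply]
  map_smul' c x := by ext i; simp [PiLp.smul_apply]

/-- The potential map `v ↦ ι(v) ⊗ id` of the `k`-convexified functional theory. -/
def potBar (k : ℕ) (ι : V →ₗ[ℝ] (H →ₗ[ℂ] H)) :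
    V →ₗ[ℝ] ((PiLp 2 fun _ : Fin k => H) →ₗ[ℂ] (PiLp 2 fun _ : Fin k => H)) where
  toFun v := opBar k (ι v)
  map_add' v w := by
    apply LinearMap.ext; intro x; ext i
    simp [opBar, map_add]
  map_smul' c v := by
    apply LinearMap.ext; intro x; ext i
    simp [opBar, map_smul]

/-- The subspace of potentials mapped to real multiples of the identity operator. -/
def scalarPart (ι : V →ₗ[ℝ] (H →ₗ[ℂ] H)) : Submodule ℝ V where
  carrier := {v : V | ∃ c : ℝ, ι v = c • (LinearMap.id : H →ₗ[ℂ] H)}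
  add_mem' := by
    rintro a b ⟨c, hc⟩ ⟨d, hd⟩
    exact ⟨c + d, by rw [map_add, hc, hd, add_smul]⟩
  zero_mem' := ⟨0, by simp⟩
  smul_mem' := by
    rintro a v ⟨c, hc⟩
    exact ⟨a * c, by rw [map_smul, hc, smul_smul]⟩

section AuxProof
variable {V H : Type*}
  [AddCommGroup V] [Module ℝ V]
  [NormedAddCommGroup H] [InnerProductSpace ℂ H]

set_option linter.unusedSectionVars false

lemma myTrace_eq_sum_inner [FiniteDimensional ℂ H] {κ : Type*} [Fintype κ] [DecidableEq κ]
    (b : OrthonormalBasis κ ℂ H) (T : H →ₗ[ℂ] H) :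
    LinearMap.trace ℂ H T = ∑ i, (inner ℂ (b i) (T (b i)) : ℂ) := by
  rw [LinearMap.trace_eq_matrix_trace ℂ b.toBasis, Matrix.trace]
  congr 1; ext i
  rw [Matrix.diag_apply, LinearMap.toMatrix_apply, b.coe_toBasis_repr_apply,
    b.repr_apply_apply, b.coe_toBasis]

def rankOne (ψ : H) : H →ₗ[ℂ] H where
  toFun x := (inner ℂ ψ x : ℂ) • ψ
  map_add' x y := by simp [inner_add_right, add_smul]
  map_smul' c x := by simp [inner_smul_right, smul_smul]

lemma trace_comp_rankOne [FiniteDimensional ℂ H] (A : H →ₗ[ℂ] H) (ψ : H) :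
    LinearMap.trace ℂ H (A ∘ₗ rankOne ψ) = (inner ℂ ψ (A ψ) : ℂ) := by
  rw [myTrace_eq_sum_inner (stdOrthonormalBasis ℂ H)]
  simp only [LinearMap.comp_apply, rankOne, LinearMap.coe_mk, AddHom.coe_mk, map_smul,
    inner_smul_right]
  exact (stdOrthonormalBasis ℂ H).sum_inner_mul_inner ψ (A ψ)

lemma ensemble_trace_ge [FiniteDimensional ℂ H] (T Γ : H →ₗ[ℂ] H) (hΓ : IsEnsembleState Γ)
    (E : ℝ) (hE : ∀ φ : H, ‖φ‖ = 1 → E ≤ expectation T φ) :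
    E ≤ (LinearMap.trace ℂ H (T ∘ₗ Γ)).re := by
  obtain ⟨hsym, hpos, htr⟩ := hΓ
  set n := Module.finrank ℂ H with hn
  set lam := hsym.eigenvalues hn.symm with hlam
  have happ : ∀ i, Γ (hsym.eigenvectorBasis hn.symm i)
      = (lam i : ℂ) • hsym.eigenvectorBasis hn.symm i :=
    hsym.apply_eigenvectorBasis hn.symm
  set b := hsym.eigenvectorBasis hn.symm with hb
  have hunit : ∀ i, ‖b i‖ = 1 := fun i => (hsym.eigenvectorBasis hn.symm).orthonormal.1 i
  have hinner : ∀ i, (inner ℂ (b i) (b i) : ℂ) = 1 := by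
    intro i
    rw [inner_self_eq_norm_sq_to_K, hunit i]; norm_num
  have hlamnn : ∀ i, 0 ≤ lam i := by
    intro i
    have := hpos (b i)
    rwa [happ i, inner_smul_right, hinner i, mul_one, Complex.ofReal_re] at this
  have hsum : ∑ i, lam i = 1 := by
    have h2 : LinearMap.trace ℂ H Γ = ∑ i, (lam i : ℂ) := by
      rw [myTrace_eq_sum_inner b Γ]
      congr 1; ext i
      rw [happ i, inner_smul_right, hinner i, mul_one]
    rw [htr] at h2
    have := congrArg Complex.re h2.symm
    simpa using this
  have h3 : (LinearMap.trace ℂ H (T ∘ₗ Γ)).re = ∑ i, lam i * expectation T (b i) := by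
    rw [myTrace_eq_sum_inner b (T ∘ₗ Γ), Complex.re_sum]
    congr 1; ext i
    rw [LinearMap.comp_apply, happ i, map_smul, inner_smul_right]
    simp [expectation, Complex.ofReal_re]
  rw [h3]
  calc E = ∑ i, lam i * E := by rw [← Finset.sum_mul, hsum, one_mul]
    _ ≤ ∑ i, lam i * expectation T (b i) :=
      Finset.sum_le_sum fun i _ => mul_le_mul_of_nonneg_left (hE (b i) (hunit i)) (hlamnn i)

set_option synthInstance.maxHeartbeats 800000 in
lemma energy_bddBelow [FiniteDimensional ℂ H] (T : H →ₗ[ℂ] H) :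
    BddBelow {r : ℝ | ∃ ψ : H, ‖ψ‖ = 1 ∧ r = expectation T ψ} := by
  refine ⟨-‖LinearMap.toContinuousLinearMap T‖, ?_⟩
  rintro r ⟨ψ, hψ, rfl⟩
  have h1 : ‖(inner ℂ ψ (T ψ) : ℂ)‖ ≤ ‖LinearMap.toContinuousLinearMap T‖ := by
    calc ‖(inner ℂ ψ (T ψ) : ℂ)‖ ≤ ‖ψ‖ * ‖T ψ‖ := norm_inner_le_norm _ _
      _ ≤ ‖ψ‖ * (‖LinearMap.toContinuousLinearMap T‖ * ‖ψ‖) := by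
          gcongr
          exact (LinearMap.toContinuousLinearMap T).le_opNorm ψ
      _ = ‖LinearMap.toContinuousLinearMap T‖ := by rw [hψ]; ring
  have h2 : |(inner ℂ ψ (T ψ) : ℂ).re| ≤ ‖(inner ℂ ψ (T ψ) : ℂ)‖ := Complex.abs_re_le_norm _
  have := (abs_le.mp (h2.trans h1)).1
  simpa [expectation] using this

end AuxProof

/-- the three universal functionals agree on pure-state
v-representable densities. -/
theorem functionals_agree_on_vrep [FiniteDimensional ℝ V] [FiniteDimensional ℂ H] [Nontrivial H]
    (ι : V →ₗ[ℝ] (H →ₗ[ℂ] H)) (W : H →ₗ[ℂ] H)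
    (hι : ∀ v : V, (ι v).IsSymmetric) (hW : W.IsSymmetric)
    (ρ : Module.Dual ℝ V) (v : V) (ψ : H)
    (hψ : ‖ψ‖ = 1) (hg : expectation (ι v + W) ψ = energy ι W v)
    (hρ : pureDensity ι ψ = ρ) :
    Fp ι W ρ = expectation W ψ ∧ Fe ι W ρ = expectation W ψ := by
  set T := ι v + W with hT
  have hEle : ∀ φ : H, ‖φ‖ = 1 → energy ι W v ≤ expectation T φ := fun φ hφ =>
    csInf_le (energy_bddBelow T) ⟨φ, hφ, rfl⟩
  have hsplit : ∀ φ : H, expectation T φ = expectation (ι v) φ + expectation W φ := by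
    intro φ
    simp [expectation, hT, inner_add_right]
  have hpure : ∀ φ : H, ‖φ‖ = 1 → pureDensity ι φ = ρ → expectation W ψ ≤ expectation W φ := by
    intro φ hφ hd
    have h1 : expectation (ι v) φ = expectation (ι v) ψ := by
      have : pureDensity ι φ v = pureDensity ι ψ v := by rw [hd, ← hρ]
      exact this
    have h2 := hEle φ hφ
    rw [← hg, hsplit φ, hsplit ψ, h1] at h2
    linarith
  have hFp : Fp ι W ρ = expectation W ψ := by
    have hmem : expectation W ψ ∈
        {r : ℝ | ∃ φ : H, ‖φ‖ = 1 ∧ pureDensity ι φ = ρ ∧ r = expectation W φ} :=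
      ⟨ψ, hψ, hρ, rfl⟩
    have hlb : ∀ r ∈ {r : ℝ | ∃ φ : H, ‖φ‖ = 1 ∧ pureDensity ι φ = ρ ∧ r = expectation W φ},
        expectation W ψ ≤ r := by
      rintro r ⟨φ, h1, h2, rfl⟩
      exact hpure φ h1 h2
    exact le_antisymm (csInf_le ⟨_, hlb⟩ hmem) (le_csInf ⟨_, hmem⟩ hlb)
  refine ⟨hFp, ?_⟩
  have htd : traceDensity ι (rankOne ψ) = ρ := by
    rw [← hρ]
    apply LinearMap.ext
    intro w
    show (LinearMap.trace ℂ H (ι w ∘ₗ rankOne ψ)).re = expectation (ι w) ψ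
    rw [trace_comp_rankOne]
    rfl
  have hens : IsEnsembleState (rankOne ψ) := by
    refine ⟨?_, ?_, ?_⟩
    · intro x y
      simp only [rankOne, LinearMap.coe_mk, AddHom.coe_mk, inner_smul_left, inner_smul_right,
        inner_conj_symm]
      ring
    · intro x
      have : (inner ℂ x ((rankOne ψ) x) : ℂ) = inner ℂ ψ x * (starRingEnd ℂ) (inner ℂ ψ x) := by
        simp only [rankOne, LinearMap.coe_mk, AddHom.coe_mk, inner_smul_right,
          ← inner_conj_symm x ψ]
      rw [this, Complex.mul_conj]
      simp [Complex.normSq_nonneg]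
    · have := trace_comp_rankOne (LinearMap.id : H →ₗ[ℂ] H) ψ
      rw [LinearMap.id_comp] at this
      rw [this]
      simp only [LinearMap.id_apply, inner_self_eq_norm_sq_to_K, hψ]
      norm_num
  have hWmem : (LinearMap.trace ℂ H (W ∘ₗ rankOne ψ)).re = expectation W ψ := by
    rw [trace_comp_rankOne]; rfl
  have hmem : expectation W ψ ∈ {r : ℝ | ∃ Γ : H →ₗ[ℂ] H, IsEnsembleState Γ ∧
      traceDensity ι Γ = ρ ∧ r = (LinearMap.trace ℂ H (W ∘ₗ Γ)).re} :=
    ⟨rankOne ψ, hens, htd, hWmem.symm⟩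
  have hlb : ∀ r ∈ {r : ℝ | ∃ Γ : H →ₗ[ℂ] H, IsEnsembleState Γ ∧
      traceDensity ι Γ = ρ ∧ r = (LinearMap.trace ℂ H (W ∘ₗ Γ)).re}, expectation W ψ ≤ r := by
    rintro r ⟨Γ, h1, h2, rfl⟩
    have hge := ensemble_trace_ge T Γ h1 (energy ι W v) hEle
    have hcomp : (T ∘ₗ Γ) = (ι v) ∘ₗ Γ + W ∘ₗ Γ := by
      rw [hT, LinearMap.add_comp]
    rw [hcomp, map_add, Complex.add_re] at hge
    have hpot : (LinearMap.trace ℂ H ((ι v) ∘ₗ Γ)).re = expectation (ι v) ψ := by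
      have : traceDensity ι Γ v = pureDensity ι ψ v := by rw [h2, ← hρ]
      exact this
    rw [hpot, ← hg, hsplit ψ] at hge
    linarith
  exact le_antisymm (csInf_le ⟨_, hlb⟩ hmem) (le_csInf ⟨_, hmem⟩ hlb)


end
end

section
/- (No-Mixing Lemma.) In an abelian functional theory, let ρ* lie in the relative interior of conv(Ω), and let Φ be a unit vector with ι*(|Φ⟩⟨Φ|) = ρ* that minimizes the constrained search at ρ*, i.e., ⟨Ψ, WΨ⟩ ≥ ⟨Φ, WΦ⟩ for every unit vector Ψ with ι*(|Ψ⟩⟨Ψ|) = ρ*. Let δ be a weight vector (a nonzero element of some weight space H_ω) with ⟨δ, Φ⟩ = 0. Then ⟨δ, WΦ⟩ = 0. -/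
open Filter Topology

noncomputable section

variable {V H : Type*}
  [AddCommGroup V] [Module ℝ V]
  [NormedAddCommGroup H] [InnerProductSpace ℂ H]

section AuxNoMixing

/-- Vectors in weight spaces of distinct weights are orthogonal. -/
lemma weight_inner_eq_zero (ι : V →ₗ[ℝ] (H →ₗ[ℂ] H)) (hι : ∀ v : V, (ι v).IsSymmetric)
    {α β : Module.Dual ℝ V} (hne : α ≠ β) {x y : H}
    (hx : x ∈ weightSpace ι α) (hy : y ∈ weightSpace ι β) : (inner ℂ x y : ℂ) = 0 := by
  obtain ⟨v, hv⟩ : ∃ v, α v ≠ β v := by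
    by_contra h
    push_neg at h
    exact hne (LinearMap.ext h)
  have h1 : (inner ℂ (ι v x) y : ℂ) = inner ℂ x (ι v y) := hι v x y
  rw [hx v, hy v, inner_smul_left, inner_smul_right, Complex.conj_ofReal] at h1
  have h2 : ((α v : ℂ) - (β v : ℂ)) * (inner ℂ x y : ℂ) = 0 := by
    rw [sub_mul, h1, sub_self]
  rcases mul_eq_zero.1 h2 with h | h
  · exact absurd (by exact_mod_cast sub_eq_zero.1 h) hv
  · exact h

/-- A finite-support representation of a point of a convex hull. -/
lemma exists_finset_rep {M : Type*} [AddCommGroup M] [Module ℝ M] {s : Set M} {τ : M}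
    (h : τ ∈ convexHull ℝ s) :
    ∃ (S : Finset M) (p : M → ℝ), ↑S ⊆ s ∧ (∀ ω ∈ S, 0 ≤ p ω) ∧
      ∑ ω ∈ S, p ω = 1 ∧ ∑ ω ∈ S, p ω • ω = τ := by
  rw [convexHull_eq_union_convexHull_finite_subsets] at h
  simp only [Set.mem_iUnion] at h
  obtain ⟨S, hS, hτ⟩ := h
  obtain ⟨p, h0, h1, h2⟩ := Finset.mem_convexHull'.1 hτ
  exact ⟨S, p, hS, h0, h1, h2⟩

/-- In a nonzero subspace there is a unit vector whose inner ℂ product with a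
given vector has nonpositive real part. -/
lemma exists_unit_nonpos (K : Submodule ℂ H) (hK : K ≠ ⊥) (g : H) :
    ∃ u : H, u ∈ K ∧ ‖u‖ = 1 ∧ (inner ℂ u g : ℂ).re ≤ 0 := by
  obtain ⟨x, hxK, hx0⟩ := Submodule.exists_mem_ne_zero_of_ne_bot hK
  have hxn : (0:ℝ) < ‖x‖ := norm_pos_iff.2 hx0
  set u : H := ((‖x‖⁻¹ : ℝ) : ℂ) • x with hu
  have huK : u ∈ K := K.smul_mem _ hxK
  have hun : ‖u‖ = 1 := by
    rw [hu, norm_smul, Complex.norm_real, Real.norm_eq_abs, abs_of_nonneg (by positivity)]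
    field_simp
  rcases le_or_gt (inner ℂ u g : ℂ).re 0 with h | h
  · exact ⟨u, huK, hun, h⟩
  · refine ⟨-u, K.neg_mem huK, by simpa using hun, ?_⟩
    rw [inner_neg_left]
    simp only [Complex.neg_re]
    linarith

/-- The self inner ℂ product as a real number. -/
lemma inner_self_re' (x : H) : (inner ℂ x x : ℂ).re = ‖x‖^2 := by
  have h := inner_self_eq_norm_sq (𝕜 := ℂ) x
  simpa using h

/-- The self inner ℂ product as a real scalar. -/
lemma inner_self_ofReal' (x : H) : (inner ℂ x x : ℂ) = ((‖x‖^2 : ℝ) : ℂ) := by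
  apply Complex.ext
  · rw [Complex.ofReal_re]
    exact inner_self_re' x
  · rw [Complex.ofReal_im]
    have h := inner_self_im (𝕜 := ℂ) x
    rwa [RCLike.im_to_complex] at h

/-- Inner product of a sum of pairwise-orthogonal vectors with one of them. -/
lemma inner_sum_eq_of_orth {ι' : Type*} [DecidableEq ι'] (s : Finset ι') (f : ι' → H)
    (h : ∀ i ∈ s, ∀ j ∈ s, i ≠ j → (inner ℂ (f i) (f j) : ℂ) = 0) {j : ι'} (hj : j ∈ s) :
    (inner ℂ (∑ i ∈ s, f i) (f j) : ℂ) = ((‖f j‖^2 : ℝ) : ℂ) := by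
  rw [sum_inner, Finset.sum_eq_single_of_mem j hj (fun i hi hne => h i hi j hj hne)]
  exact inner_self_ofReal' (f j)

/-- Expansion of the quadratic form of a symmetric operator at `Φ + Y`. -/
lemma expand_sym (T : H →ₗ[ℂ] H) (hT : T.IsSymmetric) (Φ Yv : H) :
    (inner ℂ (Φ + Yv) (T (Φ + Yv)) : ℂ).re
      = (inner ℂ Φ (T Φ) : ℂ).re + 2 * (inner ℂ Yv (T Φ) : ℂ).re + (inner ℂ Yv (T Yv) : ℂ).re := by
  rw [map_add, inner_add_left, inner_add_right, inner_add_right]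
  have h1 : (inner ℂ Φ (T Yv) : ℂ) = (starRingEnd ℂ) (inner ℂ Yv (T Φ)) := by
    rw [← hT Φ Yv, ← inner_conj_symm]
  rw [h1]
  simp only [Complex.add_re, Complex.conj_re]
  ring

/-- For each weight `ω`, a family of vectors in the weight space, parameterized by the
added density mass `q`, with controlled energy cost. -/
lemma exists_good_family [FiniteDimensional ℂ H] (ι : V →ₗ[ℝ] (H →ₗ[ℂ] H)) (W : H →ₗ[ℂ] H)
    (Φ : H) (ω : Module.Dual ℝ V) (hω : weightSpace ι ω ≠ ⊥) :
    ∃ C : ℝ, 0 ≤ C ∧ ∀ q : ℝ, ∃ y : H, 0 ≤ q →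
      y ∈ weightSpace ι ω ∧ 2 * (inner ℂ Φ y : ℂ).re + ‖y‖^2 = q ∧ ‖y‖^2 ≤ q ∧
      2 * (inner ℂ y (W Φ) : ℂ).re ≤ C * q := by
  classical
  set K := weightSpace ι ω with hK
  set P : H := (K.orthogonalProjectionOnto Φ : H) with hP
  by_cases h0 : P = 0
  · -- `Φ ⊥ K`: use a unit vector with nonpositive energy cross term
    obtain ⟨u, huK, hun, hur⟩ := exists_unit_nonpos K hω (W Φ)
    have hΦK : Φ ∈ Kᗮ := by
      rw [← Submodule.orthogonalProjectionOnto_eq_zero_iff (K := K)]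
      exact Subtype.coe_injective h0
    have hΦu : (inner ℂ Φ u : ℂ) = 0 := by
      have h2 := (Submodule.mem_orthogonal K Φ).1 hΦK u huK
      rw [← inner_conj_symm, h2, map_zero]
    refine ⟨0, le_rfl, fun q => ⟨((Real.sqrt q : ℝ) : ℂ) • u, fun hq => ?_⟩⟩
    have hnorm : ‖((Real.sqrt q : ℝ) : ℂ) • u‖ = Real.sqrt q := by
      rw [norm_smul, hun, mul_one, Complex.norm_real, Real.norm_eq_abs,
        abs_of_nonneg (Real.sqrt_nonneg q)]
    refine ⟨K.smul_mem _ huK, ?_, ?_, ?_⟩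
    · rw [inner_smul_right, hΦu, mul_zero, hnorm, Real.sq_sqrt hq]
      simp
    · rw [hnorm, Real.sq_sqrt hq]
    · rw [inner_smul_left, Complex.conj_ofReal, Complex.re_ofReal_mul, zero_mul]
      nlinarith [Real.sqrt_nonneg q]
  · -- `Φ` has a nonzero component in `K`
    have hPK : P ∈ K := (K.orthogonalProjectionOnto Φ).2
    set n : ℝ := ‖P‖ with hn
    have hn0 : 0 < n := norm_pos_iff.2 h0
    have hΦP : (inner ℂ Φ P : ℂ) = ((n^2 : ℝ) : ℂ) := by
      have h1 : Φ - P ∈ Kᗮ := K.sub_starProjection_mem_orthogonal Φ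
      have h2 : (inner ℂ (Φ - P) P : ℂ) = 0 := (Submodule.mem_orthogonal' K _).1 h1 P hPK
      have h3 : (inner ℂ P P : ℂ) = ((‖P‖ : ℂ))^2 := inner_self_eq_norm_sq_to_K P
      have h4 : (inner ℂ Φ P : ℂ) = inner ℂ (Φ - P) P + inner ℂ P P := by
        rw [← inner_add_left, sub_add_cancel]
      rw [h4, h2, h3, zero_add]
      push_cast
      ring
    refine ⟨‖W Φ‖ / n, by positivity, fun q => ?_⟩
    set cq : ℝ := Real.sqrt (n^2 + q) - n with hcq
    refine ⟨((cq / n : ℝ) : ℂ) • P, fun hq => ?_⟩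
    have hs : Real.sqrt (n^2 + q) = cq + n := by rw [hcq]; ring
    have hsq : (cq + n)^2 = n^2 + q := by
      rw [← hs, Real.sq_sqrt (by positivity)]
    have hcq0 : 0 ≤ cq := by
      rw [hcq, sub_nonneg]
      have : n = Real.sqrt (n^2) := by
        rw [Real.sqrt_sq hn0.le]
      rw [this]
      exact Real.sqrt_le_sqrt (by nlinarith)
    have hmass : 2 * (cq * n) + cq^2 = q := by nlinarith [hsq]
    have hΦy : (inner ℂ Φ (((cq / n : ℝ) : ℂ) • P) : ℂ).re = cq * n := by
      rw [inner_smul_right, hΦP, ← Complex.ofReal_mul, Complex.ofReal_re]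
      field_simp
    have hynorm : ‖((cq / n : ℝ) : ℂ) • P‖ = cq := by
      rw [norm_smul, Complex.norm_real, Real.norm_eq_abs,
        abs_of_nonneg (by positivity), ← hn]
      field_simp
    refine ⟨K.smul_mem _ hPK, ?_, ?_, ?_⟩
    · rw [hΦy, hynorm]
      nlinarith [hsq]
    · rw [hynorm]
      nlinarith [hsq, mul_nonneg hcq0 hn0.le]
    · have hre : (inner ℂ (((cq / n : ℝ) : ℂ) • P) (W Φ) : ℂ).re
          = (cq / n) * (inner ℂ P (W Φ) : ℂ).re := by
        rw [inner_smul_left, Complex.conj_ofReal, Complex.re_ofReal_mul]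
      rw [hre]
      have hbd : (inner ℂ P (W Φ) : ℂ).re ≤ n * ‖W Φ‖ := by
        have := norm_inner_le_norm (𝕜 := ℂ) P (W Φ)
        have h5 := Complex.abs_re_le_norm (inner ℂ P (W Φ) : ℂ)
        have h6 : |(inner ℂ P (W Φ) : ℂ).re| ≤ n * ‖W Φ‖ := by
          calc |(inner ℂ P (W Φ) : ℂ).re| ≤ ‖(inner ℂ P (W Φ) : ℂ)‖ := h5
          _ = ‖(inner ℂ P (W Φ) : ℂ)‖ := rfl
          _ ≤ n * ‖W Φ‖ := this
        exact (abs_le.1 h6).2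
      have hcle : cq * (2 * n) ≤ q := by nlinarith [hsq]
      have h7 : 2 * ((cq / n) * (inner ℂ P (W Φ) : ℂ).re) ≤ 2 * ((cq / n) * (n * ‖W Φ‖)) := by
        have hcn : 0 ≤ cq / n := by positivity
        nlinarith [mul_le_mul_of_nonneg_left hbd hcn]
      calc 2 * ((cq / n) * (inner ℂ P (W Φ) : ℂ).re) ≤ 2 * ((cq / n) * (n * ‖W Φ‖)) := h7
        _ = (cq * (2 * n)) * (‖W Φ‖ / n) := by field_simp
        _ ≤ q * (‖W Φ‖ / n) := mul_le_mul_of_nonneg_right hcle (by positivity)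
        _ = ‖W Φ‖ / n * q := by ring

end AuxNoMixing

set_option maxHeartbeats 3200000 in
/-- the No-Mixing Lemma. -/
theorem no_mixing [FiniteDimensional ℝ V] [FiniteDimensional ℂ H] [Nontrivial H]
    (ι : V →ₗ[ℝ] (H →ₗ[ℂ] H)) (W : H →ₗ[ℂ] H)
    (hι : ∀ v : V, (ι v).IsSymmetric) (hW : W.IsSymmetric)
    (habel : ∀ v w : V, ι v ∘ₗ ι w = ι w ∘ₗ ι v)
    (ρ₀ : Module.Dual ℝ V) (hρ₀ : IsRelInterior (convexHull ℝ (weights ι)) ρ₀)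
    (Φ : H) (hΦ : ‖Φ‖ = 1) (hΦρ : pureDensity ι Φ = ρ₀)
    (hmin : ∀ Ψ : H, ‖Ψ‖ = 1 → pureDensity ι Ψ = ρ₀ → expectation W Φ ≤ expectation W Ψ)
    (δ : H) (α : Module.Dual ℝ V) (hδmem : δ ∈ weightSpace ι α) (hδ0 : δ ≠ 0)
    (hperp : (inner ℂ δ Φ : ℂ) = 0) :
    (inner ℂ δ (W Φ) : ℂ) = 0 := by
  classical
  by_contra hc
  set c : ℂ := inner ℂ δ (W Φ) with hcdef
  have ha0 : 0 < ‖c‖ := norm_pos_iff.2 hc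
  set a : ℝ := ‖c‖ with hadef
  set z : ℂ := -(c / (a : ℂ)) with hzdef
  have haC : ((a : ℂ)) ≠ 0 := by
    simpa using ha0.ne'
  have hza : (starRingEnd ℂ) z * c = -(a : ℂ) := by
    rw [hzdef, map_neg, map_div₀, Complex.conj_ofReal]
    have h1 : (starRingEnd ℂ) c * c = ((a^2 : ℝ) : ℂ) := by
      rw [mul_comm, Complex.mul_conj, Complex.normSq_eq_norm_sq]
    rw [neg_mul, div_mul_eq_mul_div, h1, neg_inj]
    push_cast
    rw [sq, mul_div_assoc, div_self haC, mul_one]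
  have hz1 : ‖z‖ = 1 := by
    rw [hzdef, norm_neg, norm_div]
    have h2 : ‖(a:ℂ)‖ = a := by
      rw [Complex.norm_real, Real.norm_eq_abs, abs_of_pos ha0]
    rw [h2]
    have h3 : ‖c‖ = a := rfl
    rw [h3]
    field_simp [ha0.ne']
  have hδn : (0:ℝ) < ‖δ‖ := norm_pos_iff.2 hδ0
  have hαw : α ∈ weights ι := by
    simp only [weights, Set.mem_setOf_eq]
    rw [Submodule.ne_bot_iff]
    exact ⟨δ, hδmem, hδ0⟩
  obtain ⟨hρmem, hrel⟩ := hρ₀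
  obtain ⟨τ, hτmem, t, ht0, ht1, hρeq⟩ := hrel α (subset_convexHull ℝ _ hαw)
  obtain ⟨S₀, p₀, hS₀sub, hp₀0, hp₀1, hp₀τ⟩ := exists_finset_rep hτmem
  set S : Finset (Module.Dual ℝ V) := insert α S₀ with hSdef
  set p : Module.Dual ℝ V → ℝ :=
    fun ω => (if ω = α then t else 0) + (1 - t) * (if ω ∈ S₀ then p₀ ω else 0) with hpdef
  have h1t : (0:ℝ) ≤ 1 - t := by linarith
  have hite0 : ∀ ω, 0 ≤ (if ω ∈ S₀ then p₀ ω else 0) := by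
    intro ω
    split_ifs with h
    · exact hp₀0 ω h
    · exact le_rfl
  have hpnn : ∀ ω ∈ S, 0 ≤ p ω := by
    intro ω _
    apply add_nonneg
    · split_ifs
      · exact ht0.le
      · exact le_rfl
    · exact mul_nonneg h1t (hite0 ω)
  have hαS : α ∈ S := Finset.mem_insert_self α S₀
  have hpα : 0 < p α := by
    have : p α = t + (1 - t) * (if α ∈ S₀ then p₀ α else 0) := by
      rw [hpdef]
      simp
    rw [this]
    have := mul_nonneg h1t (hite0 α)
    linarith
  have hsum_ite : ∑ ω ∈ S, (if ω = α then t else 0) = t := by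
    rw [Finset.sum_ite_eq' S α (fun _ => t), if_pos hαS]
  have hsum₂ : ∑ ω ∈ S, (if ω ∈ S₀ then p₀ ω else 0) = 1 := by
    rw [hSdef, Finset.sum_insert_of_eq_zero_if_notMem (fun h => by simp [h])]
    rw [Finset.sum_congr rfl (fun ω hω => if_pos hω), hp₀1]
  have hpsum : ∑ ω ∈ S, p ω = 1 := by
    rw [hpdef]
    rw [Finset.sum_add_distrib, hsum_ite, ← Finset.mul_sum, hsum₂]
    ring
  have hτv : ∀ v : V, ∑ ω ∈ S₀, p₀ ω * ω v = τ v := by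
    intro v
    have h4 := congrArg (fun φ : Module.Dual ℝ V => φ v) hp₀τ
    simpa [LinearMap.coe_sum, Finset.sum_apply, smul_eq_mul] using h4
  have hρv : ∀ v : V, ρ₀ v = t * α v + (1 - t) * τ v := by
    intro v
    have h4 := congrArg (fun φ : Module.Dual ℝ V => φ v) hρeq
    simpa [smul_eq_mul] using h4
  have hpρ : ∀ v : V, ∑ ω ∈ S, p ω * ω v = ρ₀ v := by
    intro v
    rw [hpdef]
    have hsplit : ∀ ω, ((if ω = α then t else 0) + (1 - t) * (if ω ∈ S₀ then p₀ ω else 0)) * ω v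
        = (if ω = α then t * α v else 0) + (1 - t) * ((if ω ∈ S₀ then p₀ ω else 0) * ω v) := by
      intro ω
      split_ifs with h1 h2 h2 <;> simp [h1] <;> ring
    rw [Finset.sum_congr rfl (fun ω _ => hsplit ω), Finset.sum_add_distrib]
    rw [Finset.sum_ite_eq' S α (fun _ => t * α v), if_pos hαS, ← Finset.mul_sum]
    have h5 : ∑ ω ∈ S, (if ω ∈ S₀ then p₀ ω else 0) * ω v = τ v := by
      rw [hSdef, Finset.sum_insert_of_eq_zero_if_notMem (fun h => by simp [h])]
      rw [Finset.sum_congr rfl (fun ω hω => by rw [if_pos hω]), hτv v]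
    rw [h5, hρv v]
  have hSw : ∀ ω ∈ S, weightSpace ι ω ≠ ⊥ := by
    intro ω hω
    rcases Finset.mem_insert.1 hω with h | h
    · rw [h]; exact hαw
    · exact hS₀sub h
  -- choose the good families
  have hex : ∀ ω : Module.Dual ℝ V, ∃ C : ℝ, 0 ≤ C ∧ ∀ q : ℝ, ∃ y : H,
      0 ≤ q → weightSpace ι ω ≠ ⊥ →
      (y ∈ weightSpace ι ω ∧ 2 * (inner ℂ Φ y : ℂ).re + ‖y‖^2 = q ∧ ‖y‖^2 ≤ q ∧
        2 * (inner ℂ y (W Φ) : ℂ).re ≤ C * q) := by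
    intro ω
    by_cases h : weightSpace ι ω ≠ ⊥
    · obtain ⟨C, hC, hf⟩ := exists_good_family ι W Φ ω h
      exact ⟨C, hC, fun q => (hf q).imp (fun y hy hq _ => hy hq)⟩
    · exact ⟨0, le_rfl, fun q => ⟨0, fun _ h' => absurd h' h⟩⟩
  choose C hC0 hYex using hex
  choose Y hY using hYex
  -- the constants
  set Wc := LinearMap.toContinuousLinearMap W with hWc
  set Cw : ℝ := ‖Wc‖ with hCw
  set E₀ : ℝ := expectation W Φ with hE₀
  set G : ℝ := a * Real.sqrt (p α) / ‖δ‖ with hG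
  have hGpos : 0 < G := div_pos (mul_pos ha0 (Real.sqrt_pos.2 hpα)) hδn
  set K₁ : ℝ := ∑ ω ∈ S, C ω * p ω with hK₁
  set KK : ℝ := K₁ + Cw with hKK
  have key : ∀ ε : ℝ, 0 < ε → 2 * G * ε ≤ (KK - E₀) * ε^2 := by
    intro ε hε
    set κ : ℝ := ε * Real.sqrt (p α) / ‖δ‖ with hκ
    have hκpos : 0 < κ := div_pos (mul_pos hε (Real.sqrt_pos.2 hpα)) hδn
    set y : Module.Dual ℝ V → H :=
      fun ω => if ω = α then ((κ : ℝ) : ℂ) • (z • δ) else Y ω (ε^2 * p ω) with hydef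
    have hq0 : ∀ ω ∈ S, 0 ≤ ε^2 * p ω := fun ω hω => mul_nonneg (sq_nonneg ε) (hpnn ω hω)
    -- properties of y α
    have hyα : y α = ((κ : ℝ) : ℂ) • (z • δ) := by rw [hydef]; simp
    have hyαnorm : ‖((κ : ℝ) : ℂ) • (z • δ)‖^2 = ε^2 * p α := by
      rw [norm_smul, norm_smul, hz1, one_mul, Complex.norm_real, Real.norm_eq_abs,
        abs_of_pos hκpos, hκ, div_mul_cancel₀ _ hδn.ne', mul_pow, Real.sq_sqrt (hpnn α hαS)]
    have hymem : ∀ ω ∈ S, y ω ∈ weightSpace ι ω := by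
      intro ω hω
      by_cases h : ω = α
      · subst h
        rw [hyα]
        exact Submodule.smul_mem _ _ (Submodule.smul_mem _ _ hδmem)
      · rw [hydef]
        simp only [if_neg h]
        exact ((hY ω (ε^2 * p ω)) (hq0 ω hω) (hSw ω hω)).1
    have hymass : ∀ ω ∈ S, 2 * (inner ℂ Φ (y ω) : ℂ).re + ‖y ω‖^2 = ε^2 * p ω := by
      intro ω hω
      by_cases h : ω = α
      · subst h
        have hΦδ : (inner ℂ Φ δ : ℂ) = 0 := by
          rw [← inner_conj_symm, hperp, map_zero]
        rw [hyα, inner_smul_right, inner_smul_right, hΦδ, mul_zero, mul_zero]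
        simp only [Complex.zero_re, mul_zero, zero_add]
        exact hyαnorm
      · rw [hydef]
        simp only [if_neg h]
        exact ((hY ω (ε^2 * p ω)) (hq0 ω hω) (hSw ω hω)).2.1
    have hynsq : ∀ ω ∈ S, ‖y ω‖^2 ≤ ε^2 * p ω := by
      intro ω hω
      by_cases h : ω = α
      · subst h
        rw [hyα, hyαnorm]
      · rw [hydef]
        simp only [if_neg h]
        exact ((hY ω (ε^2 * p ω)) (hq0 ω hω) (hSw ω hω)).2.2.1
    have hyeng : ∀ ω ∈ S, ω ≠ α → 2 * (inner ℂ (y ω) (W Φ) : ℂ).re ≤ C ω * (ε^2 * p ω) := by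
      intro ω hω h
      rw [hydef]
      simp only [if_neg h]
      exact ((hY ω (ε^2 * p ω)) (hq0 ω hω) (hSw ω hω)).2.2.2
    have hyengα : 2 * (inner ℂ (y α) (W Φ) : ℂ).re = -(2 * G * ε) := by
      rw [hyα, inner_smul_left, inner_smul_left, Complex.conj_ofReal, ← hcdef, hza]
      rw [show ((κ:ℝ):ℂ) * -(a:ℂ) = ((-(κ * a) : ℝ) : ℂ) by push_cast; ring, Complex.ofReal_re]
      rw [hκ, hG]
      ring
    -- the perturbed vector and its inner-product expansions
    have hid : LinearMap.IsSymmetric (LinearMap.id : H →ₗ[ℂ] H) := fun _ _ => rfl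
    set Yv : H := ∑ ω ∈ S, y ω with hYv
    have horth : ∀ i ∈ S, ∀ j ∈ S, i ≠ j → (inner ℂ (y i) (y j) : ℂ) = 0 := fun i hi j hj hne =>
      weight_inner_eq_zero ι hι hne (hymem i hi) (hymem j hj)
    have hYvy : ∀ ω ∈ S, (inner ℂ Yv (y ω) : ℂ) = ((‖y ω‖^2 : ℝ) : ℂ) := fun ω hω =>
      inner_sum_eq_of_orth S y horth hω
    have hYvΦT : ∀ g : H, (inner ℂ Yv g : ℂ) = ∑ ω ∈ S, (inner ℂ (y ω) g : ℂ) := by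
      intro g
      rw [hYv]
      exact sum_inner S y g
    have hYnorm2 : ‖Yv‖^2 = ∑ ω ∈ S, ‖y ω‖^2 := by
      have h6 : (inner ℂ Yv Yv : ℂ) = ∑ ω ∈ S, (inner ℂ Yv (y ω) : ℂ) := by
        rw [hYv]
        exact inner_sum S y _
      have h7 : (inner ℂ Yv Yv : ℂ) = ((∑ ω ∈ S, ‖y ω‖^2 : ℝ) : ℂ) := by
        rw [h6, Finset.sum_congr rfl hYvy]
        push_cast
        rfl
      have h9 := congrArg Complex.re h7
      rw [Complex.ofReal_re] at h9
      rw [← inner_self_re' Yv]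
      exact h9
    have hmass_sum : ∑ ω ∈ S, (2 * (inner ℂ Φ (y ω) : ℂ).re + ‖y ω‖^2) = ε^2 := by
      rw [Finset.sum_congr rfl hymass, ← Finset.mul_sum, hpsum, mul_one]
    have hreΦy : ∀ ω : Module.Dual ℝ V, (inner ℂ (y ω) Φ : ℂ).re = (inner ℂ Φ (y ω) : ℂ).re := by
      intro ω
      rw [← inner_conj_symm, Complex.conj_re]
    -- norm of the perturbed vector
    have hΨnorm2 : ‖Φ + Yv‖^2 = 1 + ε^2 := by
      have h9 := expand_sym LinearMap.id hid Φ Yv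
      simp only [LinearMap.id_coe, id_eq] at h9
      have hPP : (inner ℂ Φ Φ : ℂ).re = 1 := by
        rw [inner_self_re', hΦ]
        norm_num
      have hYvΦ : (inner ℂ Yv Φ : ℂ).re = ∑ ω ∈ S, (inner ℂ Φ (y ω) : ℂ).re := by
        rw [hYvΦT Φ, Complex.re_sum]
        exact Finset.sum_congr rfl (fun ω _ => hreΦy ω)
      have hYvYv : (inner ℂ Yv Yv : ℂ).re = ∑ ω ∈ S, ‖y ω‖^2 := by
        have h6 : (inner ℂ Yv Yv : ℂ) = ∑ ω ∈ S, (inner ℂ Yv (y ω) : ℂ) := by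
          rw [hYv]
          exact inner_sum S y _
        rw [h6, Finset.sum_congr rfl hYvy, Complex.re_sum]
        exact Finset.sum_congr rfl (fun ω _ => Complex.ofReal_re _)
      have h11 : (inner ℂ (Φ + Yv) (Φ + Yv) : ℂ).re = ‖Φ + Yv‖^2 := inner_self_re' _
      rw [← h11, h9, hPP, hYvΦ, hYvYv]
      have h12 : 2 * ∑ ω ∈ S, (inner ℂ Φ (y ω) : ℂ).re + ∑ ω ∈ S, ‖y ω‖^2 = ε^2 := by
        rw [← hmass_sum, Finset.mul_sum, ← Finset.sum_add_distrib]
      linarith [h12]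
    -- density of the perturbed vector
    have hρΦ : ∀ v : V, (inner ℂ Φ ((ι v) Φ) : ℂ).re = ρ₀ v := by
      intro v
      have h13 := congrArg (fun φ : Module.Dual ℝ V => φ v) hΦρ
      simpa [pureDensity, expectation] using h13
    have hdens : ∀ v : V, (inner ℂ (Φ + Yv) ((ι v) (Φ + Yv)) : ℂ).re = (1 + ε^2) * ρ₀ v := by
      intro v
      have h9 := expand_sym (ι v) (hι v) Φ Yv
      have hcross : (inner ℂ Yv ((ι v) Φ) : ℂ).re = ∑ ω ∈ S, ω v * (inner ℂ Φ (y ω) : ℂ).re := by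
        rw [hYvΦT ((ι v) Φ), Complex.re_sum]
        apply Finset.sum_congr rfl
        intro ω hω
        have h10 : (inner ℂ (y ω) ((ι v) Φ) : ℂ) = ((ω v : ℝ) : ℂ) * inner ℂ (y ω) Φ := by
          rw [← hι v (y ω) Φ, hymem ω hω v, inner_smul_left, Complex.conj_ofReal]
        rw [h10, Complex.re_ofReal_mul, hreΦy ω]
      have hquad : (inner ℂ Yv ((ι v) Yv) : ℂ).re = ∑ ω ∈ S, ω v * ‖y ω‖^2 := by
        have h11 : (ι v) Yv = ∑ ω ∈ S, ((ω v : ℝ) : ℂ) • y ω := by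
          rw [hYv, map_sum]
          exact Finset.sum_congr rfl (fun ω hω => hymem ω hω v)
        rw [h11, inner_sum, Complex.re_sum]
        apply Finset.sum_congr rfl
        intro ω hω
        rw [inner_smul_right, hYvy ω hω, ← Complex.ofReal_mul, Complex.ofReal_re]
      have h12 : ∑ ω ∈ S, ω v * (ε^2 * p ω) = ε^2 * ρ₀ v := by
        rw [← hpρ v, Finset.mul_sum]
        exact Finset.sum_congr rfl (fun ω _ => by ring)
      have h13 : ∑ ω ∈ S, ω v * (2 * (inner ℂ Φ (y ω) : ℂ).re + ‖y ω‖^2) = ε^2 * ρ₀ v := by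
        rw [← h12]
        exact Finset.sum_congr rfl (fun ω hω => by rw [hymass ω hω])
      have h14 : ∑ ω ∈ S, ω v * (2 * (inner ℂ Φ (y ω) : ℂ).re + ‖y ω‖^2)
          = 2 * ∑ ω ∈ S, ω v * (inner ℂ Φ (y ω) : ℂ).re + ∑ ω ∈ S, ω v * ‖y ω‖^2 := by
        rw [Finset.mul_sum, ← Finset.sum_add_distrib]
        exact Finset.sum_congr rfl (fun ω _ => by ring)
      rw [h9, hρΦ v, hcross, hquad]
      linarith [h13, h14]
    -- energy of the perturbed vector
    have hEn : expectation W (Φ + Yv) ≤ E₀ - 2*G*ε + KK * ε^2 := by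
      have h9 := expand_sym W hW Φ Yv
      have hcross : (inner ℂ Yv (W Φ) : ℂ).re = ∑ ω ∈ S, (inner ℂ (y ω) (W Φ) : ℂ).re := by
        rw [hYvΦT (W Φ), Complex.re_sum]
      have hcross_bd : 2 * (inner ℂ Yv (W Φ) : ℂ).re ≤ -(2*G*ε) + K₁ * ε^2 := by
        rw [hcross, Finset.mul_sum]
        rw [← Finset.add_sum_erase S _ hαS]
        have hrest : ∑ ω ∈ S.erase α, 2 * (inner ℂ (y ω) (W Φ) : ℂ).re
            ≤ ∑ ω ∈ S.erase α, C ω * (ε^2 * p ω) :=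
          Finset.sum_le_sum (fun ω hω =>
            hyeng ω (Finset.mem_of_mem_erase hω) (Finset.ne_of_mem_erase hω))
        have hrest2 : ∑ ω ∈ S.erase α, C ω * (ε^2 * p ω) ≤ ∑ ω ∈ S, C ω * (ε^2 * p ω) :=
          Finset.sum_le_sum_of_subset_of_nonneg (Finset.erase_subset α S)
            (fun ω hω _ => mul_nonneg (hC0 ω) (hq0 ω hω))
        have hK1 : ∑ ω ∈ S, C ω * (ε^2 * p ω) = K₁ * ε^2 := by
          rw [hK₁, Finset.sum_mul]
          exact Finset.sum_congr rfl (fun ω _ => by ring)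
        linarith [hyengα, hrest, hrest2]
      have hYv2 : ‖Yv‖^2 ≤ ε^2 := by
        rw [hYnorm2]
        calc ∑ ω ∈ S, ‖y ω‖^2 ≤ ∑ ω ∈ S, ε^2 * p ω := Finset.sum_le_sum hynsq
          _ = ε^2 := by rw [← Finset.mul_sum, hpsum, mul_one]
      have hquad_bd : (inner ℂ Yv (W Yv) : ℂ).re ≤ Cw * ε^2 := by
        have h15 : (inner ℂ Yv (W Yv) : ℂ).re ≤ ‖Yv‖ * (Cw * ‖Yv‖) := by
          calc (inner ℂ Yv (W Yv) : ℂ).re ≤ |(inner ℂ Yv (W Yv) : ℂ).re| := le_abs_self _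
            _ ≤ ‖(inner ℂ Yv (W Yv) : ℂ)‖ := Complex.abs_re_le_norm _
            _ = ‖(inner ℂ Yv (W Yv) : ℂ)‖ := rfl
            _ ≤ ‖Yv‖ * ‖W Yv‖ := norm_inner_le_norm _ _
            _ ≤ ‖Yv‖ * (Cw * ‖Yv‖) := by
                apply mul_le_mul_of_nonneg_left _ (norm_nonneg _)
                have h16 : W Yv = Wc Yv := by
                  rw [hWc, LinearMap.coe_toContinuousLinearMap']
                rw [h16, hCw]
                exact Wc.le_opNorm Yv
        have hCw0 : 0 ≤ Cw := norm_nonneg _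
        have h18 : ‖Yv‖ * (Cw * ‖Yv‖) = Cw * ‖Yv‖^2 := by ring
        have h19 : Cw * ‖Yv‖^2 ≤ Cw * ε^2 := mul_le_mul_of_nonneg_left hYv2 hCw0
        linarith [h15]
      have h17 : expectation W (Φ + Yv)
          = (inner ℂ Φ (W Φ) : ℂ).re + 2 * (inner ℂ Yv (W Φ) : ℂ).re + (inner ℂ Yv (W Yv) : ℂ).re := h9
      have hE0eq : expectation W Φ = (inner ℂ Φ (W Φ) : ℂ).re := rfl
      rw [h17, hE₀, hKK, hE0eq]
      linarith [hcross_bd, hquad_bd]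
    -- normalization and the minimality of Φ
    have h1ε : (0:ℝ) < 1 + ε^2 := by positivity
    set sc : ℝ := (Real.sqrt (1 + ε^2))⁻¹ with hsc
    have hscpos : 0 < sc := by
      rw [hsc]
      exact inv_pos.2 (Real.sqrt_pos.2 h1ε)
    have hΨnorm : ‖Φ + Yv‖ = Real.sqrt (1+ε^2) := by
      rw [← Real.sqrt_sq (norm_nonneg (Φ+Yv)), hΨnorm2]
    have hunit : ‖((sc:ℝ):ℂ) • (Φ + Yv)‖ = 1 := by
      rw [norm_smul, Complex.norm_real, Real.norm_eq_abs, abs_of_pos hscpos, hΨnorm, hsc]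
      field_simp
    have hs2 : sc^2 = (1+ε^2)⁻¹ := by
      rw [hsc, inv_pow, Real.sq_sqrt h1ε.le]
    have hsmul_exp : ∀ T : H →ₗ[ℂ] H,
        expectation T (((sc:ℝ):ℂ) • (Φ+Yv)) = (1+ε^2)⁻¹ * expectation T (Φ+Yv) := by
      intro T
      show (inner ℂ (((sc:ℝ):ℂ) • (Φ+Yv)) (T (((sc:ℝ):ℂ) • (Φ+Yv))) : ℂ).re = _
      rw [map_smul, inner_smul_left, inner_smul_right, Complex.conj_ofReal, ← mul_assoc,
        ← Complex.ofReal_mul, ← sq, Complex.re_ofReal_mul, hs2]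
      rfl
    have hdensΨ' : pureDensity ι (((sc:ℝ):ℂ) • (Φ+Yv)) = ρ₀ := by
      apply LinearMap.ext
      intro v
      have h18 : (pureDensity ι (((sc:ℝ):ℂ) • (Φ+Yv))) v
          = expectation (ι v) (((sc:ℝ):ℂ) • (Φ+Yv)) := rfl
      rw [h18, hsmul_exp (ι v)]
      have h19 : expectation (ι v) (Φ+Yv) = (inner ℂ (Φ+Yv) ((ι v) (Φ+Yv)) : ℂ).re := rfl
      rw [h19, hdens v]
      field_simp
    have hminap := hmin _ hunit hdensΨ'
    rw [hsmul_exp W] at hminap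
    have h20 : E₀ * (1+ε^2) ≤ expectation W (Φ+Yv) := by
      have h21 : expectation W Φ * (1+ε^2) ≤ ((1+ε^2)⁻¹ * expectation W (Φ+Yv)) * (1+ε^2) :=
        mul_le_mul_of_nonneg_right hminap h1ε.le
      have h22 : ((1+ε^2)⁻¹ * expectation W (Φ+Yv)) * (1+ε^2) = expectation W (Φ+Yv) := by
        field_simp
      rw [h22] at h21
      rw [hE₀]
      exact h21
    nlinarith [h20, hEn]
  -- conclusion: let ε → 0
  set M : ℝ := |KK - E₀| with hM
  have hM0 : 0 ≤ M := abs_nonneg _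
  set ε₀ : ℝ := G / (M + 1) with hε₀
  have hε₀p : 0 < ε₀ := div_pos hGpos (by linarith)
  have hk := key ε₀ hε₀p
  have h17 : (KK - E₀) * ε₀^2 ≤ M * ε₀^2 :=
    mul_le_mul_of_nonneg_right (le_abs_self _) (sq_nonneg _)
  have h18 : M * ε₀^2 ≤ G * ε₀ := by
    have h19 : M * ε₀ ≤ G := by
      calc M * ε₀ = G * (M/(M+1)) := by rw [hε₀]; ring
        _ ≤ G * 1 := by
            apply mul_le_mul_of_nonneg_left _ hGpos.le
            rw [div_le_one (by linarith)]
            linarith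
        _ = G := mul_one G
    calc M * ε₀^2 = (M * ε₀) * ε₀ := by ring
      _ ≤ G * ε₀ := mul_le_mul_of_nonneg_right h19 hε₀p.le
  nlinarith [hk, h17, h18, mul_pos hGpos hε₀p]

end
end

section
/- (Characterization of critical values in abelian functional theories.) Let the theory be abelian and let ρ ∈ conv(Ω) be a representable density, and let d denote the dimension of the affine span of Ω. Then the following are equivalent: (i) there exists a unit vector Ψ with ι*(|Ψ⟩⟨Ψ|) = ρ such that the real-linear map from { φ ∈ H : ⟨φ, Ψ⟩ = 0 } to V* sending φ to the functional v ↦ 2 Re⟨φ, ι(v)Ψ⟩ does not have image equal to the direction space of the affine span of Ω; (ii) there exists a subset Ω' ⊆ Ω with at most d elements such that ρ lies in the convex hull of Ω'. -/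
open Filter Topology

noncomputable section

variable {V H : Type*}
  [AddCommGroup V] [Module ℝ V]
  [NormedAddCommGroup H] [InnerProductSpace ℂ H]

section AuxProofAFT
set_option linter.unusedSectionVars false

variable {ι : V →ₗ[ℝ] (H →ₗ[ℂ] H)}

lemma weightSpace_orth (hι : ∀ v, (ι v).IsSymmetric) {α β : Module.Dual ℝ V} (hαβ : α ≠ β)
    {x y : H} (hx : x ∈ weightSpace ι α) (hy : y ∈ weightSpace ι β) : (inner ℂ x y : ℂ) = 0 := by
  obtain ⟨v, hv⟩ : ∃ v, α v ≠ β v := by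
    by_contra h; push_neg at h; exact hαβ (LinearMap.ext h)
  have h1 : (inner ℂ x (ι v y) : ℂ) = (β v : ℂ) * inner ℂ x y := by
    rw [hy v, inner_smul_right]
  have h2 : (inner ℂ x (ι v y) : ℂ) = (α v : ℂ) * inner ℂ x y := by
    rw [← hι v x y, hx v, inner_smul_left]
    simp [Complex.conj_ofReal]
  have h3 : (α v : ℂ) * inner ℂ x y = (β v : ℂ) * inner ℂ x y := h2.symm.trans h1
  by_contra hne
  exact hv (Complex.ofReal_injective (mul_right_cancel₀ hne h3))

variable [FiniteDimensional ℝ V] [FiniteDimensional ℂ H]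

lemma weightSpace_top (hι : ∀ v, (ι v).IsSymmetric)
    (habel : ∀ v w : V, ι v ∘ₗ ι w = ι w ∘ₗ ι v) :
    ⨆ α ∈ weights ι, weightSpace ι α = ⊤ := by
  classical
  let b : Module.Basis (Fin (Module.finrank ℝ V)) ℝ V := Module.finBasis ℝ V
  let T : Fin (Module.finrank ℝ V) → (H →ₗ[ℂ] H) := fun i => ι (b i)
  have hcomm : Pairwise (Function.onFun Commute T) := by
    intro i j _
    show T i * T j = T j * T i
    rw [Module.End.mul_eq_comp, Module.End.mul_eq_comp]
    exact habel _ _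
  have htop := LinearMap.IsSymmetric.iSup_iInf_eq_top_of_commute
    (T := T) (fun i => hι _) hcomm
  rw [eq_top_iff, ← htop]
  apply iSup_le
  intro χ
  by_cases hbot : (⨅ i, Module.End.eigenspace (T i) (χ i)) = ⊥
  · rw [hbot]; exact bot_le
  · obtain ⟨ψ₀, hψ₀, hψ₀ne⟩ := Submodule.exists_mem_ne_zero_of_ne_bot hbot
    have hreal : ∀ i, ∃ r : ℝ, χ i = (r : ℂ) := by
      intro i
      have hev : Module.End.HasEigenvalue (T i) (χ i) :=
        Module.End.hasEigenvalue_of_hasEigenvector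
          ⟨(Submodule.mem_iInf _).mp hψ₀ i, hψ₀ne⟩
      exact Complex.conj_eq_iff_real.mp ((hι (b i)).conj_eigenvalue_eq_self hev)
    choose r hr using hreal
    set α : Module.Dual ℝ V := b.constr ℝ r with hα
    have hle : (⨅ i, Module.End.eigenspace (T i) (χ i)) ≤ weightSpace ι α := by
      intro ψ hψ v
      have hψi : ∀ i, ι (b i) ψ = (r i : ℂ) • ψ := by
        intro i
        have h := (Submodule.mem_iInf _).mp hψ i
        rw [Module.End.mem_eigenspace_iff] at h
        rw [← hr i]; exact h
      have hv : v = ∑ i, b.repr v i • b i := (b.sum_repr v).symm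
      have hαv : α v = ∑ i, b.repr v i * r i := by
        rw [hα, Module.Basis.constr_apply_fintype]
        simp [Module.Basis.equivFun_apply, smul_eq_mul]
      rw [hαv]
      conv_lhs => rw [hv]
      rw [map_sum, LinearMap.sum_apply]
      have hterm : ∀ i, (ι (b.repr v i • b i)) ψ = ((b.repr v i * r i : ℝ) : ℂ) • ψ := by
        intro i
        rw [map_smul, LinearMap.smul_apply, hψi i,
          ← algebraMap_smul ℂ (b.repr v i) ((r i : ℂ) • ψ), smul_smul,
          Complex.coe_algebraMap, ← Complex.ofReal_mul]
      rw [Finset.sum_congr rfl fun i _ => hterm i, ← Finset.sum_smul]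
      norm_cast
    have hαw : α ∈ weights ι := by
      intro hc
      exact hψ₀ne (by simpa [hc] using hle hψ₀)
    exact le_trans hle (le_iSup₂ (f := fun α _ => weightSpace ι α) α hαw)

lemma weights_finite (hι : ∀ v, (ι v).IsSymmetric) : (weights ι).Finite := by
  have h : ∀ α : weights ι, ∃ x : H, x ∈ weightSpace ι (α : Module.Dual ℝ V) ∧ x ≠ 0 :=
    fun α => Submodule.exists_mem_ne_zero_of_ne_bot α.2
  choose f hf hf0 using h
  have horth : Orthonormal ℂ (fun α : weights ι => (‖f α‖⁻¹ : ℂ) • f α) := by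
    constructor
    · intro α; exact norm_smul_inv_norm (hf0 α)
    · intro α β hne
      rw [inner_smul_left, inner_smul_right,
        weightSpace_orth hι (Subtype.coe_injective.ne hne) (hf α) (hf β)]
      simp
  have : Finite (weights ι) := horth.linearIndependent.finite
  exact Set.finite_coe_iff.mp this

variable (ι) in
def wproj (α : Module.Dual ℝ V) (ψ : H) : H :=
  (weightSpace ι α).orthogonalProjectionOnto ψ

lemma wproj_mem (α : Module.Dual ℝ V) (ψ : H) : wproj ι α ψ ∈ weightSpace ι α :=
  SetLike.coe_mem _

lemma weightSpace_apply {α : Module.Dual ℝ V} {ψ : H} (h : ψ ∈ weightSpace ι α) (v : V) :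
    ι v ψ = (α v : ℂ) • ψ := h v

lemma wproj_eq_self {α : Module.Dual ℝ V} {ψ : H} (h : ψ ∈ weightSpace ι α) :
    wproj ι α ψ = ψ :=
  Submodule.starProjection_eq_self_iff.mpr h

lemma wproj_eq_zero (hι : ∀ v, (ι v).IsSymmetric) {α β : Module.Dual ℝ V} (hαβ : α ≠ β)
    {ψ : H} (h : ψ ∈ weightSpace ι β) : wproj ι α ψ = 0 := by
  have hmem : ψ ∈ (weightSpace ι α)ᗮ := by
    intro u hu; exact weightSpace_orth hι hαβ hu h
  simp only [wproj, Submodule.orthogonalProjectionOnto_apply_of_mem_orthogonal hmem,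
    ZeroMemClass.coe_zero]

lemma sum_wproj (hι : ∀ v, (ι v).IsSymmetric)
    (habel : ∀ v w : V, ι v ∘ₗ ι w = ι w ∘ₗ ι v) (hfin : (weights ι).Finite) (ψ : H) :
    ∑ α ∈ hfin.toFinset, wproj ι α ψ = ψ := by
  classical
  set L : H →ₗ[ℂ] H := ∑ α ∈ hfin.toFinset,
    ((weightSpace ι α).subtype ∘ₗ ((weightSpace ι α).orthogonalProjectionOnto).toLinearMap) with hL
  have hLapp : ∀ φ : H, L φ = ∑ α ∈ hfin.toFinset, wproj ι α φ := by
    intro φ; rw [hL, LinearMap.sum_apply]; rfl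
  have key : ∀ β ∈ weights ι, weightSpace ι β ≤ LinearMap.eqLocus L LinearMap.id := by
    intro β hβ φ hφ
    have : L φ = φ := by
      rw [hLapp, Finset.sum_eq_single_of_mem β (hfin.mem_toFinset.mpr hβ)]
      · exact wproj_eq_self hφ
      · intro α _ hαβ; exact wproj_eq_zero hι hαβ hφ
    exact this
  have htop : (⊤ : Submodule ℂ H) ≤ LinearMap.eqLocus L LinearMap.id := by
    rw [← weightSpace_top hι habel]
    exact iSup₂_le key
  have hψ : L ψ = ψ := htop (Submodule.mem_top (x := ψ))
  rw [← hLapp]; exact hψ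

lemma inner_eq_sum (hι : ∀ v, (ι v).IsSymmetric)
    (habel : ∀ v w : V, ι v ∘ₗ ι w = ι w ∘ₗ ι v) (hfin : (weights ι).Finite) (φ ψ : H) :
    (inner ℂ φ ψ : ℂ) = ∑ α ∈ hfin.toFinset, inner ℂ φ (wproj ι α ψ) := by
  conv_lhs => rw [← sum_wproj hι habel hfin ψ]
  rw [inner_sum]

lemma inner_op_eq_sum (hι : ∀ v, (ι v).IsSymmetric)
    (habel : ∀ v w : V, ι v ∘ₗ ι w = ι w ∘ₗ ι v) (hfin : (weights ι).Finite)
    (φ ψ : H) (v : V) :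
    (inner ℂ φ (ι v ψ) : ℂ) = ∑ α ∈ hfin.toFinset, (α v : ℂ) * inner ℂ φ (wproj ι α ψ) := by
  conv_lhs => rw [← sum_wproj hι habel hfin ψ]
  rw [map_sum, inner_sum]
  refine Finset.sum_congr rfl fun α _ => ?_
  rw [weightSpace_apply (wproj_mem α ψ) v, inner_smul_right]

lemma wproj_inner_self (α : Module.Dual ℝ V) (ψ : H) :
    (inner ℂ ψ (wproj ι α ψ) : ℂ) = ((‖wproj ι α ψ‖ ^ 2 : ℝ) : ℂ) := by
  have h2 := Submodule.inner_starProjection_left_eq_right (weightSpace ι α) ψ (wproj ι α ψ)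
  simp only [Submodule.starProjection_apply] at h2
  have h1 : ((weightSpace ι α).orthogonalProjectionOnto (wproj ι α ψ) : H) = wproj ι α ψ :=
    Submodule.starProjection_eq_self_iff.mpr (wproj_mem α ψ)
  rw [h1] at h2
  have h3 : ((weightSpace ι α).orthogonalProjectionOnto ψ : H) = wproj ι α ψ := rfl
  rw [h3] at h2
  rw [← h2, inner_self_eq_norm_sq_to_K]
  norm_cast

lemma pureDensity_eq (hι : ∀ v, (ι v).IsSymmetric)
    (habel : ∀ v w : V, ι v ∘ₗ ι w = ι w ∘ₗ ι v) (hfin : (weights ι).Finite) (ψ : H) :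
    pureDensity ι ψ = ∑ α ∈ hfin.toFinset, (‖wproj ι α ψ‖ ^ 2 : ℝ) • α := by
  refine LinearMap.ext fun v => ?_
  simp only [pureDensity, expectation, LinearMap.coe_mk, AddHom.coe_mk, LinearMap.sum_apply,
    LinearMap.smul_apply, smul_eq_mul]
  rw [inner_op_eq_sum hι habel hfin ψ ψ v, Complex.re_sum]
  refine Finset.sum_congr rfl fun α _ => ?_
  rw [wproj_inner_self, ← Complex.ofReal_mul, Complex.ofReal_re, mul_comm]

lemma derivDensity_eq (hι : ∀ v, (ι v).IsSymmetric)
    (habel : ∀ v w : V, ι v ∘ₗ ι w = ι w ∘ₗ ι v) (hfin : (weights ι).Finite) (ψ φ : H) :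
    derivDensity ι ψ φ = ∑ α ∈ hfin.toFinset, (2 * (inner ℂ φ (wproj ι α ψ) : ℂ).re) • α := by
  refine LinearMap.ext fun v => ?_
  simp only [derivDensity, LinearMap.coe_mk, AddHom.coe_mk, LinearMap.sum_apply,
    LinearMap.smul_apply, smul_eq_mul]
  rw [inner_op_eq_sum hι habel hfin φ ψ v, Complex.re_sum, Finset.mul_sum]
  refine Finset.sum_congr rfl fun α _ => ?_
  rw [Complex.re_ofReal_mul]
  ring

lemma norm_sq_sum (hι : ∀ v, (ι v).IsSymmetric)
    (habel : ∀ v w : V, ι v ∘ₗ ι w = ι w ∘ₗ ι v) (hfin : (weights ι).Finite) (ψ : H) :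
    ∑ α ∈ hfin.toFinset, ‖wproj ι α ψ‖ ^ 2 = ‖ψ‖ ^ 2 := by
  have h := inner_eq_sum hι habel hfin ψ ψ
  simp_rw [wproj_inner_self] at h
  rw [inner_self_eq_norm_sq_to_K] at h
  apply Complex.ofReal_injective
  push_cast at h ⊢
  exact h.symm

lemma comb_mem_vectorSpan {s : Finset (Module.Dual ℝ V)} {c : Module.Dual ℝ V → ℝ}
    (h : ∑ α ∈ s, c α = 0) :
    ∑ α ∈ s, c α • α ∈ vectorSpan ℝ (s : Set (Module.Dual ℝ V)) := by
  classical
  have hw : ∑ a ∈ (Finset.univ : Finset ↥s), c ↑a = 0 := (Finset.sum_coe_sort s c).trans h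
  have hmem := weightedVSub_mem_vectorSpan (k := ℝ) hw
    (fun a : ↥s => (a : Module.Dual ℝ V))
  rw [Finset.weightedVSub_eq_linear_combination _ hw] at hmem
  rw [Finset.sum_coe_sort s (fun α => c α • α)] at hmem
  simpa [Subtype.range_coe_subtype, Finset.setOf_mem] using hmem

lemma deriv_mem_vectorSpan (hι : ∀ v, (ι v).IsSymmetric)
    (habel : ∀ v w : V, ι v ∘ₗ ι w = ι w ∘ₗ ι v) (hfin : (weights ι).Finite)
    {ψ φ : H} (hφ : (inner ℂ φ ψ : ℂ) = 0)
    {s : Finset (Module.Dual ℝ V)} (hsub : s ⊆ hfin.toFinset)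
    (hzero : ∀ γ ∈ hfin.toFinset, γ ∉ s → wproj ι γ ψ = 0) :
    derivDensity ι ψ φ ∈ vectorSpan ℝ (s : Set (Module.Dual ℝ V)) := by
  classical
  rw [derivDensity_eq hι habel hfin ψ φ]
  rw [← Finset.sum_subset hsub (fun γ hγ hγs => by rw [hzero γ hγ hγs]; simp)]
  apply comb_mem_vectorSpan
  have h1 : ∑ γ ∈ s, (2 * (inner ℂ φ (wproj ι γ ψ) : ℂ).re)
      = ∑ γ ∈ hfin.toFinset, (2 * (inner ℂ φ (wproj ι γ ψ) : ℂ).re) :=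
    Finset.sum_subset hsub (fun γ hγ hγs => by rw [hzero γ hγ hγs]; simp)
  rw [h1, ← Finset.mul_sum, ← Complex.re_sum, ← inner_eq_sum hι habel hfin φ ψ, hφ]
  simp

variable (ι) in
def derivMapL (ψ : H) : H →ₗ[ℝ] Module.Dual ℝ V where
  toFun φ := derivDensity ι ψ φ
  map_add' φ φ' := by
    refine LinearMap.ext fun v => ?_
    simp [derivDensity, inner_add_left]
    ring
  map_smul' c φ := by
    refine LinearMap.ext fun v => ?_
    simp only [derivDensity, LinearMap.coe_mk, AddHom.coe_mk, RingHom.id_apply,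
      LinearMap.smul_apply, smul_eq_mul]
    rw [← algebraMap_smul ℂ c φ, inner_smul_left, Complex.coe_algebraMap,
      Complex.conj_ofReal, Complex.re_ofReal_mul]
    ring

def perpSpace (ψ : H) : Submodule ℝ H where
  carrier := {φ : H | (inner ℂ φ ψ : ℂ) = 0}
  add_mem' := by
    intro a b ha hb
    simp only [Set.mem_setOf_eq] at *
    rw [inner_add_left, ha, hb, add_zero]
  zero_mem' := by simp
  smul_mem' := by
    intro c φ hφ
    simp only [Set.mem_setOf_eq] at *
    rw [← algebraMap_smul ℂ c φ, inner_smul_left, hφ, mul_zero]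

lemma derivSet_eq (ψ : H) :
    {d : Module.Dual ℝ V | ∃ φ : H, (inner ℂ φ ψ : ℂ) = 0 ∧ d = derivDensity ι ψ φ}
      = ↑((perpSpace ψ).map (derivMapL ι ψ)) := by
  ext d
  simp only [Set.mem_setOf_eq, SetLike.mem_coe, Submodule.mem_map]
  constructor
  · rintro ⟨φ, h1, h2⟩; exact ⟨φ, h1, h2.symm⟩
  · rintro ⟨φ, h1, h2⟩; exact ⟨φ, h1, h2.symm⟩

lemma smul_inner' (c : ℝ) (x y : H) : (inner ℂ (c • x) y : ℂ) = (c : ℂ) * inner ℂ x y := by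
  rw [← algebraMap_smul ℂ c x, inner_smul_left, Complex.coe_algebraMap, Complex.conj_ofReal]

lemma forward_half (hι : ∀ v, (ι v).IsSymmetric)
    (habel : ∀ v w : V, ι v ∘ₗ ι w = ι w ∘ₗ ι v) {ρ : Module.Dual ℝ V}
    (hyp : ∃ ψ : H, ‖ψ‖ = 1 ∧ pureDensity ι ψ = ρ ∧
        {d : Module.Dual ℝ V | ∃ φ : H, (inner ℂ φ ψ : ℂ) = 0 ∧ d = derivDensity ι ψ φ}
          ≠ ↑(vectorSpan ℝ (weights ι))) :
    ∃ s : Finset (Module.Dual ℝ V), ↑s ⊆ weights ι ∧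
        s.card ≤ Module.finrank ℝ (vectorSpan ℝ (weights ι)) ∧
        ρ ∈ convexHull ℝ (s : Set (Module.Dual ℝ V)) := by
  classical
  obtain ⟨ψ, hψ1, hψ2, hne⟩ := hyp
  have hfin := weights_finite hι
  set Ω := hfin.toFinset with hΩdef
  set Supp := Ω.filter (fun α => wproj ι α ψ ≠ 0) with hSupp
  have hSuppΩ : Supp ⊆ Ω := Finset.filter_subset _ _
  have hSuppw : (Supp : Set (Module.Dual ℝ V)) ⊆ weights ι := fun α hα =>
    hfin.mem_toFinset.mp (hSuppΩ (Finset.mem_coe.mp hα))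
  have horth : ∀ δ γ : Module.Dual ℝ V, δ ≠ γ →
      (inner ℂ (wproj ι δ ψ) (wproj ι γ ψ) : ℂ) = 0 := fun δ γ h =>
    weightSpace_orth hι h (wproj_mem δ ψ) (wproj_mem γ ψ)
  have hself : ∀ γ : Module.Dual ℝ V,
      (inner ℂ (wproj ι γ ψ) (wproj ι γ ψ) : ℂ) = ((‖wproj ι γ ψ‖ ^ 2 : ℝ) : ℂ) := fun γ => by
    rw [inner_self_eq_norm_sq_to_K]; norm_cast
  have himg : {d : Module.Dual ℝ V | ∃ φ : H, (inner ℂ φ ψ : ℂ) = 0 ∧ d = derivDensity ι ψ φ}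
      = ↑(vectorSpan ℝ (Supp : Set (Module.Dual ℝ V))) := by
    apply Set.Subset.antisymm
    · rintro d ⟨φ, hφ, rfl⟩
      exact deriv_mem_vectorSpan hι habel hfin hφ hSuppΩ (fun γ hγ hγs => by
        by_contra hne0
        exact hγs (Finset.mem_filter.mpr ⟨hγ, hne0⟩))
    · rw [derivSet_eq]
      refine SetLike.coe_subset_coe.mpr ?_
      rw [vectorSpan_def]
      apply Submodule.span_le.mpr
      intro x hx
      rw [Set.mem_vsub] at hx
      obtain ⟨α, hα, β, hβ, rfl⟩ := hx
      have hαS : α ∈ Supp := Finset.mem_coe.mp hα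
      have hβS : β ∈ Supp := Finset.mem_coe.mp hβ
      have hαΩ : α ∈ Ω := hSuppΩ hαS
      have hβΩ : β ∈ Ω := hSuppΩ hβS
      by_cases hab : α = β
      · subst hab
        rw [vsub_self]
        exact Submodule.zero_mem _
      · set pα := ‖wproj ι α ψ‖ ^ 2 with hpαdef
        set pβ := ‖wproj ι β ψ‖ ^ 2 with hpβdef
        have hpα : 0 < pα := pow_pos (norm_pos_iff.mpr (Finset.mem_filter.mp hαS).2) 2
        have hpβ : 0 < pβ := pow_pos (norm_pos_iff.mpr (Finset.mem_filter.mp hβS).2) 2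
        set φ := (2 * pα)⁻¹ • wproj ι α ψ - (2 * pβ)⁻¹ • wproj ι β ψ with hφdef
        have key : ∀ γ : Module.Dual ℝ V, (inner ℂ (wproj ι γ ψ) ψ : ℂ)
            = ((‖wproj ι γ ψ‖ ^ 2 : ℝ) : ℂ) := fun γ => by
          rw [← inner_conj_symm, wproj_inner_self, Complex.conj_ofReal]
        have hhalf : ∀ p : ℝ, 0 < p → (2 * p)⁻¹ * p = 1 / 2 := fun p hp => by
          field_simp
        have hφperp : φ ∈ perpSpace ψ := by
          show (inner ℂ φ ψ : ℂ) = 0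
          rw [hφdef, inner_sub_left, smul_inner', smul_inner', key α, key β,
            ← hpαdef, ← hpβdef, ← Complex.ofReal_mul, ← Complex.ofReal_mul,
            ← Complex.ofReal_sub, hhalf pα hpα, hhalf pβ hpβ]
          norm_num
        have hφinner : ∀ γ : Module.Dual ℝ V, (inner ℂ φ (wproj ι γ ψ) : ℂ)
            = if γ = α then ((1/2 : ℝ) : ℂ) else if γ = β then ((-(1/2) : ℝ) : ℂ) else 0 := by
          intro γ
          rw [hφdef, inner_sub_left, smul_inner', smul_inner']
          by_cases h1 : γ = α
          · subst h1
            rw [if_pos rfl, hself γ, horth β γ (fun h => hab h.symm), mul_zero, sub_zero,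
              ← hpαdef, ← Complex.ofReal_mul, hhalf pα hpα]
          · rw [if_neg h1]
            by_cases h2 : γ = β
            · subst h2
              rw [if_pos rfl, hself γ, horth α γ (fun h => hab h), mul_zero, zero_sub,
                ← hpβdef, ← Complex.ofReal_mul, hhalf pβ hpβ]
              norm_num
            · rw [if_neg h2, horth α γ (fun h => h1 h.symm), horth β γ (fun h => h2 h.symm)]
              ring
        refine Submodule.mem_map.mpr ⟨φ, hφperp, ?_⟩
        show derivDensity ι ψ φ = α -ᵥ β
        refine LinearMap.ext fun v => ?_
        have happ : (derivDensity ι ψ φ) v = 2 * (inner ℂ φ (ι v ψ) : ℂ).re := rfl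
        rw [happ, inner_op_eq_sum hι habel hfin φ ψ v]
        have hterm : ∀ γ ∈ Ω, (γ v : ℂ) * (inner ℂ φ (wproj ι γ ψ) : ℂ)
            = (if γ = α then ((α v / 2 : ℝ) : ℂ) else 0)
              + (if γ = β then ((-(β v) / 2 : ℝ) : ℂ) else 0) := by
          intro γ _
          rw [hφinner γ]
          by_cases h1 : γ = α
          · subst h1
            rw [if_pos rfl, if_pos rfl, if_neg hab]
            push_cast; ring
          · rw [if_neg h1, if_neg h1]
            by_cases h2 : γ = β
            · subst h2
              rw [if_pos rfl, if_pos rfl]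
              push_cast; ring
            · rw [if_neg h2, if_neg h2, mul_zero, add_zero]
        rw [Finset.sum_congr rfl hterm, Finset.sum_add_distrib,
          Finset.sum_ite_eq' Ω α _, Finset.sum_ite_eq' Ω β _, if_pos hαΩ, if_pos hβΩ]
        have hvs : (α -ᵥ β) v = α v - β v := rfl
        rw [hvs, ← Complex.ofReal_add, Complex.ofReal_re]
        ring
  have hlt : vectorSpan ℝ (Supp : Set (Module.Dual ℝ V)) < vectorSpan ℝ (weights ι) := by
    refine lt_of_le_of_ne (vectorSpan_mono ℝ hSuppw) (fun h => hne ?_)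
    rw [himg, h]
  have hrk : Module.finrank ℝ (vectorSpan ℝ (Supp : Set (Module.Dual ℝ V)))
      < Module.finrank ℝ (vectorSpan ℝ (weights ι)) :=
    Submodule.finrank_lt_finrank_of_lt hlt
  have hsum1 : ∑ α ∈ Supp, ‖wproj ι α ψ‖ ^ 2 = 1 := by
    rw [hSupp, Finset.sum_filter_of_ne (fun γ _ h => by
      intro h0
      exact h (by rw [h0]; simp))]
    rw [norm_sq_sum hι habel hfin ψ, hψ1]
    norm_num
  have hρc : ρ ∈ convexHull ℝ (Supp : Set (Module.Dual ℝ V)) := by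
    rw [Finset.convexHull_eq]
    refine ⟨fun α => ‖wproj ι α ψ‖ ^ 2, fun α _ => by positivity, hsum1, ?_⟩
    rw [Finset.centerMass_eq_of_sum_1 _ _ hsum1, ← hψ2, pureDensity_eq hι habel hfin ψ]
    simp only [id_eq]
    rw [hSupp, Finset.sum_filter_of_ne (fun γ _ h => by
      intro h0
      exact h (by rw [h0]; simp))]
  rw [convexHull_eq_union] at hρc
  simp only [Set.mem_iUnion] at hρc
  obtain ⟨t, hts, hai, hρt⟩ := hρc
  refine ⟨t, fun x hx => hSuppw (hts hx), ?_, hρt⟩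
  have htne : t.Nonempty := by
    rcases Finset.eq_empty_or_nonempty t with h | h
    · rw [h] at hρt
      simp at hρt
    · exact h
  have htpos : 0 < t.card := Finset.card_pos.mpr htne
  have hfr := hai.finrank_vectorSpan (k := ℝ)
    (n := t.card - 1) (by rw [Fintype.card_coe]; omega)
  have hrange : Set.range ((↑) : ↥t → Module.Dual ℝ V) = (t : Set (Module.Dual ℝ V)) := by
    rw [Subtype.range_coe_subtype]
    exact Finset.setOf_mem
  rw [hrange] at hfr
  have hmono : vectorSpan ℝ (t : Set (Module.Dual ℝ V))
      ≤ vectorSpan ℝ (Supp : Set (Module.Dual ℝ V)) := vectorSpan_mono ℝ hts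
  have h2 := Submodule.finrank_mono hmono
  omega

lemma backward_half (hι : ∀ v, (ι v).IsSymmetric)
    (habel : ∀ v w : V, ι v ∘ₗ ι w = ι w ∘ₗ ι v) {ρ : Module.Dual ℝ V}
    (hyp : ∃ s : Finset (Module.Dual ℝ V), ↑s ⊆ weights ι ∧
        s.card ≤ Module.finrank ℝ (vectorSpan ℝ (weights ι)) ∧
        ρ ∈ convexHull ℝ (s : Set (Module.Dual ℝ V))) :
    ∃ ψ : H, ‖ψ‖ = 1 ∧ pureDensity ι ψ = ρ ∧
        {d : Module.Dual ℝ V | ∃ φ : H, (inner ℂ φ ψ : ℂ) = 0 ∧ d = derivDensity ι ψ φ}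
          ≠ ↑(vectorSpan ℝ (weights ι)) := by
  classical
  obtain ⟨s, hsw, hscard, hρs⟩ := hyp
  have hfin := weights_finite hι
  set Ω := hfin.toFinset with hΩdef
  have hsΩ : s ⊆ Ω := fun α hα => hfin.mem_toFinset.mpr (hsw hα)
  have hsne : s.Nonempty := by
    rcases Finset.eq_empty_or_nonempty s with h | h
    · rw [h] at hρs
      simp at hρs
    · exact h
  rw [Finset.convexHull_eq] at hρs
  obtain ⟨w, hw0, hw1, hwρ⟩ := hρs
  rw [Finset.centerMass_eq_of_sum_1 _ _ hw1] at hwρ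
  simp only [id_eq] at hwρ
  have hex : ∀ α : Module.Dual ℝ V, ∃ e : H, α ∈ s → (e ∈ weightSpace ι α ∧ ‖e‖ = 1) := by
    intro α
    by_cases h : α ∈ s
    · obtain ⟨x, hx, hx0⟩ := Submodule.exists_mem_ne_zero_of_ne_bot (hsw h)
      exact ⟨(‖x‖⁻¹ : ℂ) • x, fun _ => ⟨Submodule.smul_mem _ _ hx, norm_smul_inv_norm hx0⟩⟩
    · exact ⟨0, fun h' => absurd h' h⟩
  choose e he using hex
  set ψ := ∑ α ∈ s, ((Real.sqrt (w α) : ℝ) : ℂ) • e α with hψdef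
  have hP : ∀ γ ∈ Ω, wproj ι γ ψ = if γ ∈ s then ((Real.sqrt (w γ) : ℝ) : ℂ) • e γ else 0 := by
    intro γ hγ
    have hsplit : wproj ι γ ψ = ∑ α ∈ s, ((Real.sqrt (w α) : ℝ) : ℂ) • wproj ι γ (e α) := by
      show (((weightSpace ι γ).orthogonalProjectionOnto ψ : _) : H) = _
      rw [hψdef, map_sum]
      push_cast
      refine Finset.sum_congr rfl fun α hα => ?_
      rw [map_smul]
      rfl
    rw [hsplit]
    by_cases hγs : γ ∈ s
    · rw [if_pos hγs, Finset.sum_eq_single_of_mem γ hγs]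
      · rw [wproj_eq_self (he γ hγs).1]
      · intro α hα hαγ
        rw [wproj_eq_zero hι hαγ.symm (he α hα).1, smul_zero]
    · rw [if_neg hγs, Finset.sum_eq_zero]
      intro α hα
      rw [wproj_eq_zero hι (fun h : γ = α => hγs (by rw [h]; exact hα)) (he α hα).1, smul_zero]
  have hnorm2 : ∀ γ ∈ Ω, ‖wproj ι γ ψ‖ ^ 2 = if γ ∈ s then w γ else 0 := by
    intro γ hγ
    rw [hP γ hγ]
    by_cases hγs : γ ∈ s
    · rw [if_pos hγs, if_pos hγs, norm_smul, (he γ hγs).2, mul_one, Complex.norm_real, Real.norm_eq_abs,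
        abs_of_nonneg (Real.sqrt_nonneg _), Real.sq_sqrt (hw0 γ hγs)]
    · rw [if_neg hγs, if_neg hγs]
      simp
  have hsumite : ∀ f : Module.Dual ℝ V → ℝ,
      True := fun _ => trivial
  have hn2 : ‖ψ‖ ^ 2 = 1 := by
    rw [← norm_sq_sum hι habel hfin ψ, Finset.sum_congr rfl hnorm2,
      Finset.sum_ite_mem, Finset.inter_eq_right.mpr hsΩ, hw1]
  have hnψ : ‖ψ‖ = 1 := by nlinarith [norm_nonneg ψ]
  have hdens : pureDensity ι ψ = ρ := by
    rw [pureDensity_eq hι habel hfin ψ, ← hwρ,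
      Finset.sum_congr rfl (fun γ hγ => by rw [hnorm2 γ hγ])]
    simp only [ite_smul, zero_smul]
    rw [Finset.sum_ite_mem, Finset.inter_eq_right.mpr hsΩ]
  refine ⟨ψ, hnψ, hdens, ?_⟩
  intro heq
  have himg_sub : {d : Module.Dual ℝ V | ∃ φ : H, (inner ℂ φ ψ : ℂ) = 0 ∧ d = derivDensity ι ψ φ}
      ⊆ ↑(vectorSpan ℝ (s : Set (Module.Dual ℝ V))) := by
    rintro d ⟨φ, hφ, rfl⟩
    exact deriv_mem_vectorSpan hι habel hfin hφ hsΩ (fun γ hγ hγs => by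
      rw [hP γ hγ, if_neg hγs])
  rw [heq] at himg_sub
  have hle : vectorSpan ℝ (weights ι) ≤ vectorSpan ℝ (s : Set (Module.Dual ℝ V)) :=
    fun x hx => himg_sub hx
  have h1 := Submodule.finrank_mono hle
  have hspos : 0 < s.card := Finset.card_pos.mpr hsne
  have h2 : Module.finrank ℝ (vectorSpan ℝ (s : Set (Module.Dual ℝ V))) ≤ s.card - 1 := by
    have h3 := finrank_vectorSpan_range_le ℝ ((↑) : ↥s → Module.Dual ℝ V)
      (n := s.card - 1) (by rw [Fintype.card_coe]; omega)
    have hrange : Set.range ((↑) : ↥s → Module.Dual ℝ V) = (s : Set (Module.Dual ℝ V)) := by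
      rw [Subtype.range_coe_subtype]
      exact Finset.setOf_mem
    rwa [hrange] at h3
  omega

end AuxProofAFT

/-- characterization of critical values in abelian functional theories. -/
theorem abelian_critical_value_iff [FiniteDimensional ℝ V] [FiniteDimensional ℂ H] [Nontrivial H]
    (ι : V →ₗ[ℝ] (H →ₗ[ℂ] H)) (W : H →ₗ[ℂ] H)
    (hι : ∀ v : V, (ι v).IsSymmetric) (hW : W.IsSymmetric)
    (habel : ∀ v w : V, ι v ∘ₗ ι w = ι w ∘ₗ ι v)
    (ρ : Module.Dual ℝ V) (hρ : ρ ∈ convexHull ℝ (weights ι)) :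
    (∃ ψ : H, ‖ψ‖ = 1 ∧ pureDensity ι ψ = ρ ∧
        {d : Module.Dual ℝ V | ∃ φ : H, (inner ℂ φ ψ : ℂ) = 0 ∧ d = derivDensity ι ψ φ}
          ≠ ↑(vectorSpan ℝ (weights ι)))
    ↔ ∃ s : Finset (Module.Dual ℝ V), ↑s ⊆ weights ι ∧
        s.card ≤ Module.finrank ℝ (vectorSpan ℝ (weights ι)) ∧
        ρ ∈ convexHull ℝ (s : Set (Module.Dual ℝ V)) := by
  exact ⟨forward_half hι habel, backward_half hι habel⟩

end
end
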